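/- Let x₁,…,xₙ ∈ ℝᵈ satisfy the ℓ₂² triangle inequalities. Let Q be a positive definite d×d matrix such that (xᵢ−xⱼ)ᵀQ(xᵢ−xⱼ) ≤ 1 for all i,j. Then the map f(xᵢ) = (1/√d) Q^{-1/2} xᵢ satisfies ‖f(xᵢ)−f(xⱼ)‖ ≥ (1/√d)‖xᵢ−xⱼ‖² for all i,j. -/

import Mathlib

open Matrix

noncomputable def Matrix.PosSemidef.sqrt {n : Type*} [Fintype n] [DecidableEq n]
    {A : Matrix n n ℝ} (hA : A.PosSemidef) : Matrix n n ℝ :=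
  hA.1.eigenvectorUnitary.1 * diagonal (Real.sqrt ∘ hA.1.eigenvalues) *
    (star hA.1.eigenvectorUnitary : Matrix n n ℝ)

lemma Matrix.PosSemidef.sqrt_isHermitian_aux {n : Type*} [Fintype n] [DecidableEq n]
    {A : Matrix n n ℝ} (hA : A.PosSemidef) : hA.sqrt.IsHermitian := by
  unfold Matrix.PosSemidef.sqrt IsHermitian
  simp [mul_assoc, Matrix.star_eq_conjTranspose]

lemma Matrix.PosSemidef.sqrt_mul_self_aux {n : Type*} [Fintype n] [DecidableEq n]
    {A : Matrix n n ℝ} (hA : A.PosSemidef) : hA.sqrt * hA.sqrt = A := by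
  unfold Matrix.PosSemidef.sqrt
  have hU : (star hA.1.eigenvectorUnitary : Matrix n n ℝ) * hA.1.eigenvectorUnitary.1 = 1 :=
    Matrix.UnitaryGroup.star_mul_self _
  have hD : diagonal (Real.sqrt ∘ hA.1.eigenvalues) * diagonal (Real.sqrt ∘ hA.1.eigenvalues)
      = diagonal (RCLike.ofReal ∘ hA.1.eigenvalues) := by
    rw [diagonal_mul_diagonal]
    congr 1; funext i
    simp [Real.mul_self_sqrt (hA.eigenvalues_nonneg i)]
  conv_rhs => rw [hA.1.spectral_theorem]
  rw [Unitary.conjStarAlgAut_apply]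
  calc _ = hA.1.eigenvectorUnitary.1 * diagonal (Real.sqrt ∘ hA.1.eigenvalues) *
      ((star hA.1.eigenvectorUnitary : Matrix n n ℝ) * hA.1.eigenvectorUnitary.1) *
      diagonal (Real.sqrt ∘ hA.1.eigenvalues) * (star hA.1.eigenvectorUnitary : Matrix n n ℝ) := by
        simp only [mul_assoc]
    _ = _ := by rw [hU, mul_one, mul_assoc _ (diagonal _) (diagonal _), hD]

/-- If `(xᵢ−xⱼ)ᵀQ(xᵢ−xⱼ) ≤ 1` for all `i,j` (Q ≻ 0), then `f(xᵢ) = (1/√d)Q^{-1/2}xᵢ`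
satisfies `‖f(xᵢ)−f(xⱼ)‖ ≥ (1/√d)‖xᵢ−xⱼ‖²`. -/
theorem stmt7 (n d : ℕ) (x : Fin n → Fin d → ℝ)
    (htri : ∀ i j k, (x i - x j) ⬝ᵥ (x i - x j) + (x j - x k) ⬝ᵥ (x j - x k) ≥
      (x i - x k) ⬝ᵥ (x i - x k))
    (Q : Matrix (Fin d) (Fin d) ℝ) (hQ : Q.PosDef)
    (hencl : ∀ i j, (x i - x j) ⬝ᵥ Q.mulVec (x i - x j) ≤ 1)
    (f : Fin n → Fin d → ℝ)
    (hf : ∀ i, f i = (1 / Real.sqrt d) • (hQ.posSemidef.sqrt⁻¹).mulVec (x i)) :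
    ∀ i j, Real.sqrt ((f i - f j) ⬝ᵥ (f i - f j)) ≥
      (1 / Real.sqrt d) * ((x i - x j) ⬝ᵥ (x i - x j)) := by
  intro i j
  set S := hQ.posSemidef.sqrt with hSdef
  have hS : S.IsHermitian := hQ.posSemidef.sqrt_isHermitian_aux
  have hSsym : Sᵀ = S := by
    have := hS
    rwa [Matrix.IsHermitian, conjTranspose_eq_transpose_of_trivial] at this
  have hSS : S * S = Q := hQ.posSemidef.sqrt_mul_self_aux
  have hdet : IsUnit S.det := by
    have hQdet : Q.det ≠ 0 := ne_of_gt hQ.det_pos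
    have : S.det * S.det = Q.det := by rw [← det_mul, hSS]
    exact isUnit_iff_ne_zero.mpr (fun h => hQdet (by rw [← this, h, mul_zero]))
  have hinv : S⁻¹ * S = 1 := nonsing_inv_mul S hdet
  set y := x i - x j with hy
  set a := S⁻¹ *ᵥ y with ha
  set b := S *ᵥ y with hb
  have hc : (0:ℝ) ≤ 1 / Real.sqrt d := by positivity
  -- f i - f j = (1/√d) • a
  have hfd : f i - f j = (1 / Real.sqrt d) • a := by
    rw [hf i, hf j, ← smul_sub, ← mulVec_sub]
  have hdml : ∀ (A : Matrix (Fin d) (Fin d) ℝ) (u v : Fin d → ℝ),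
      (A *ᵥ u) ⬝ᵥ v = u ⬝ᵥ (Aᵀ *ᵥ v) := by
    intro A u v
    rw [dotProduct_mulVec, vecMul_transpose]
  -- a ⬝ᵥ b = y ⬝ᵥ y
  have hab : a ⬝ᵥ b = y ⬝ᵥ y := by
    rw [ha, hb, hdml, mulVec_mulVec, transpose_nonsing_inv, hSsym, hinv, one_mulVec]
  -- b ⬝ᵥ b = y ⬝ᵥ Q *ᵥ y ≤ 1
  have hbb : b ⬝ᵥ b ≤ 1 := by
    have h1 : b ⬝ᵥ b = y ⬝ᵥ Q *ᵥ y := by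
      rw [hb, hdml, mulVec_mulVec, hSsym, hSS]
    rw [h1]; exact hencl i j
  have hbb0 : 0 ≤ b ⬝ᵥ b := by
    simp only [dotProduct]
    exact Finset.sum_nonneg fun k _ => mul_self_nonneg _
  have haa0 : 0 ≤ a ⬝ᵥ a := by
    simp only [dotProduct]
    exact Finset.sum_nonneg fun k _ => mul_self_nonneg _
  -- Cauchy–Schwarz: y ⬝ᵥ y = a ⬝ᵥ b ≤ √(a⬝a) √(b⬝b) ≤ √(a⬝a)
  have hCS : y ⬝ᵥ y ≤ Real.sqrt (a ⬝ᵥ a) := by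
    rw [← hab]
    calc a ⬝ᵥ b = ∑ k, a k * b k := rfl
      _ ≤ Real.sqrt (∑ k, a k ^ 2) * Real.sqrt (∑ k, b k ^ 2) :=
          Real.sum_mul_le_sqrt_mul_sqrt _ _ _
      _ = Real.sqrt (a ⬝ᵥ a) * Real.sqrt (b ⬝ᵥ b) := by
          simp [dotProduct, sq]
      _ ≤ Real.sqrt (a ⬝ᵥ a) * 1 := by
          apply mul_le_mul_of_nonneg_left _ (Real.sqrt_nonneg _)
          simpa using Real.sqrt_le_sqrt hbb
      _ = Real.sqrt (a ⬝ᵥ a) := mul_one _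
  have hlhs : Real.sqrt ((f i - f j) ⬝ᵥ (f i - f j)) =
      (1 / Real.sqrt d) * Real.sqrt (a ⬝ᵥ a) := by
    rw [hfd, smul_dotProduct, dotProduct_smul, smul_eq_mul, smul_eq_mul, ← mul_assoc,
      Real.sqrt_mul (by positivity), Real.sqrt_mul_self hc]
  rw [hlhs]
  exact mul_le_mul_of_nonneg_left hCS hc
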